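/- Let $b$ be a positive real number and let $w$ be a weight on $\mathbb{R}^n$. Then there exists a positive constant $C$ (depending only on $n$ and $b$) such that for every $x_0 \in \mathbb{R}^n$ and almost every $x \in \mathbb{R}^n \setminus \{x_0\}$ with $|x_0 - x| \le 1$, one has $\int_{\{y : |x_0-y| > 2|x_0-x|^{1/(1+b)}\}} |K_b(x-y) - K_b(x_0-y)|\, w(y)\,dy \le C\, Mw(x)$. -/

import Mathlib

open MeasureTheory Metric Filter
open scoped ENNReal NNReal

/-- The strongly singular kernel `K_b(x) = e^{i|x|^{-b}} |x|^{-n} χ_{{|x| ≤ 1}}(x)` on `ℝⁿ`. -/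
noncomputable def stronglySingularKernel (n : ℕ) (b : ℝ) (x : EuclideanSpace ℝ (Fin n)) : ℂ :=
  if 0 < ‖x‖ ∧ ‖x‖ ≤ 1 then
    Complex.exp (Complex.I * ((‖x‖ ^ (-b) : ℝ) : ℂ)) / ((‖x‖ : ℂ) ^ (n : ℕ))
  else 0

/-- The strongly singular integral operator `T_b f(x) = p.v. ∫ K_b(x-y) f(y) dy`,
defined as the limit of the truncated integrals as the truncation parameter `ε → 0⁺`. -/
noncomputable def stronglySingularOp (n : ℕ) (b : ℝ) (f : EuclideanSpace ℝ (Fin n) → ℂ)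
    (x : EuclideanSpace ℝ (Fin n)) : ℂ :=
  limUnder (nhdsWithin (0 : ℝ) (Set.Ioi 0))
    fun ε => ∫ y in {y : EuclideanSpace ℝ (Fin n) | ε < dist x y},
      stronglySingularKernel n b (x - y) * f y

/-- The Hardy–Littlewood maximal function of a weight `w`, valued in `ℝ≥0∞`. -/
noncomputable def maximalFn (n : ℕ) (w : EuclideanSpace ℝ (Fin n) → ℝ)
    (x : EuclideanSpace ℝ (Fin n)) : ℝ≥0∞ :=
  ⨆ (c : EuclideanSpace ℝ (Fin n)) (r : ℝ) (_ : 0 < r) (_ : x ∈ ball c r),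
    (∫⁻ y in ball c r, ENNReal.ofReal (w y)) / volume (ball c r)

/-- A weight `w` on `ℝⁿ` is a Muckenhoupt `A₁` weight: it is nonnegative, locally integrable,
and there is `C > 0` with `(1/|B|) ∫_B w ≤ C essinf_B w` for every ball `B`. -/
def IsA1 (n : ℕ) (w : EuclideanSpace ℝ (Fin n) → ℝ) : Prop :=
  LocallyIntegrable w volume ∧ (∀ x, 0 ≤ w x) ∧
    ∃ C : ℝ, 0 < C ∧ ∀ (c : EuclideanSpace ℝ (Fin n)) (r : ℝ), 0 < r →
      (∫⁻ y in ball c r, ENNReal.ofReal (w y)) ≤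
        ENNReal.ofReal C * volume (ball c r) *
          essInf (fun y => ENNReal.ofReal (w y)) (volume.restrict (ball c r))

/-- A weight `w` on `ℝⁿ` is a Muckenhoupt `A_p` weight for `1 < p < ∞`. -/
def IsAp (n : ℕ) (p : ℝ) (w : EuclideanSpace ℝ (Fin n) → ℝ) : Prop :=
  LocallyIntegrable w volume ∧ (∀ x, 0 ≤ w x) ∧
    ∃ C : ℝ, 0 < C ∧ ∀ (c : EuclideanSpace ℝ (Fin n)) (r : ℝ), 0 < r →
      ((∫⁻ y in ball c r, ENNReal.ofReal (w y)) / volume (ball c r)) *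
        ((∫⁻ y in ball c r, ENNReal.ofReal (w y) ^ (-1 / (p - 1))) /
          volume (ball c r)) ^ (p - 1) ≤ ENNReal.ofReal C

noncomputable def c1 (n : ℕ) (b : ℝ) : ℝ := (4 * b + 2 * n) * (2 : ℝ) ^ ((n : ℝ) + b + 1)

lemma c1_pos (n : ℕ) (b : ℝ) (hb : 0 < b) : 0 < c1 n b := by
  unfold c1
  have : (0:ℝ) < (2 : ℝ) ^ ((n : ℝ) + b + 1) := Real.rpow_pos_of_pos (by norm_num) _
  positivity

lemma rpow_diff_le_aux (p : ℝ) {a c : ℝ} (ha : 0 < a) (hac : a ≤ c) :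
    |c ^ p - a ^ p| ≤ |p| * (c - a) * (a ^ (p - 1) + c ^ (p - 1)) := by
  rcases eq_or_lt_of_le hac with h | h
  · subst h; rw [sub_self, abs_zero, sub_self, mul_zero, zero_mul]
  · have hc : 0 < c := ha.trans h
    obtain ⟨ξ, hξ, hslope⟩ := exists_hasDerivAt_eq_slope (fun x => x ^ p)
      (fun x => p * x ^ (p - 1)) h
      (by
        intro x hx
        have hx0 : 0 < x := lt_of_lt_of_le ha hx.1
        exact (Real.continuousAt_rpow_const x p (Or.inl hx0.ne')).continuousWithinAt)
      (by
        intro x hx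
        exact Real.hasDerivAt_rpow_const (Or.inl (ha.trans hx.1).ne'))
    have hξ0 : 0 < ξ := ha.trans hξ.1
    have key : c ^ p - a ^ p = p * ξ ^ (p - 1) * (c - a) := by
      rw [hslope, div_mul_cancel₀]
      exact (sub_pos.2 h).ne'
    have hbound : ξ ^ (p - 1) ≤ a ^ (p - 1) + c ^ (p - 1) := by
      rcases le_or_gt 0 (p - 1) with hp | hp
      · have : ξ ^ (p - 1) ≤ c ^ (p - 1) := Real.rpow_le_rpow hξ0.le hξ.2.le hp
        nlinarith [Real.rpow_nonneg ha.le (p - 1)]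
      · have : ξ ^ (p - 1) ≤ a ^ (p - 1) :=
          Real.rpow_le_rpow_of_nonpos ha hξ.1.le hp.le
        nlinarith [Real.rpow_nonneg hc.le (p - 1)]
    rw [key, abs_mul, abs_mul, abs_of_nonneg (sub_nonneg.2 hac),
      abs_of_nonneg (Real.rpow_nonneg hξ0.le _)]
    have h1 : |p| * ξ ^ (p - 1) ≤ |p| * (a ^ (p - 1) + c ^ (p - 1)) :=
      mul_le_mul_of_nonneg_left hbound (abs_nonneg p)
    nlinarith [abs_nonneg p, sub_nonneg.2 hac, Real.rpow_nonneg hξ0.le (p - 1)]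

lemma rpow_diff_le (p : ℝ) {a c : ℝ} (ha : 0 < a) (hc : 0 < c) :
    |a ^ p - c ^ p| ≤ |p| * |a - c| * (a ^ (p - 1) + c ^ (p - 1)) := by
  rcases le_total a c with h | h
  · rw [abs_sub_comm, abs_sub_comm a c, abs_of_nonneg (by linarith : 0 ≤ c - a)]
    exact rpow_diff_le_aux p ha h
  · rw [abs_of_nonneg (by linarith : 0 ≤ a - c)]
    have := rpow_diff_le_aux p hc h
    rw [add_comm (c ^ (p-1))] at this
    linarith [this]

lemma norm_exp_I (u : ℝ) : ‖Complex.exp (Complex.I * u)‖ = 1 := by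
  exact Complex.norm_exp_I_mul_ofReal u

lemma exp_I_diff_le (s t : ℝ) :
    ‖Complex.exp (Complex.I * s) - Complex.exp (Complex.I * t)‖ ≤ 2 * |s - t| := by
  have h1 : Complex.exp (Complex.I * s) - Complex.exp (Complex.I * t)
      = Complex.exp (Complex.I * t) * (Complex.exp (Complex.I * ((s - t : ℝ) : ℂ)) - 1) := by
    rw [mul_sub, ← Complex.exp_add, mul_one]
    push_cast
    ring_nf
  rw [h1, norm_mul]
  have hnorm : ∀ u : ℝ, ‖Complex.exp (Complex.I * u)‖ = 1 := by
    intro u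
    exact Complex.norm_exp_I_mul_ofReal u
  rw [hnorm t, one_mul]
  have habs : ‖Complex.I * ((s - t : ℝ) : ℂ)‖ = |s - t| := by
    rw [norm_mul, Complex.norm_I, one_mul, Complex.norm_real, Real.norm_eq_abs]
  rcases le_or_gt |s - t| 1 with h | h
  · have := Complex.norm_exp_sub_one_le (x := Complex.I * ((s - t : ℝ) : ℂ)) (by rw [habs]; exact h)
    rw [habs] at this
    simpa using this
  · have h2 : ‖Complex.exp (Complex.I * ((s - t : ℝ) : ℂ)) - 1‖ ≤ 2 := by
      refine (norm_sub_le _ _).trans ?_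
      rw [hnorm (s - t), norm_one]; norm_num
    linarith

lemma kernel_norm (n : ℕ) (b : ℝ) (u : EuclideanSpace ℝ (Fin n))
    (h0 : 0 < ‖u‖) (h1 : ‖u‖ ≤ 1) :
    ‖stronglySingularKernel n b u‖ = (‖u‖ ^ (n : ℕ))⁻¹ := by
  rw [stronglySingularKernel, if_pos ⟨h0, h1⟩, norm_div, norm_exp_I, norm_pow,
    Complex.norm_real, Real.norm_eq_abs, abs_of_pos h0, one_div]

lemma kernel_sub_smooth (n : ℕ) (b : ℝ) (u v : EuclideanSpace ℝ (Fin n))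
    (hu0 : 0 < ‖u‖) (hu1 : ‖u‖ ≤ 1) (hv0 : 0 < ‖v‖) (hv1 : ‖v‖ ≤ 1) :
    ‖stronglySingularKernel n b u - stronglySingularKernel n b v‖ ≤
      2 * |‖u‖ ^ (-b) - ‖v‖ ^ (-b)| * (‖u‖ ^ (n : ℕ))⁻¹ +
        |(‖u‖ ^ (n : ℕ))⁻¹ - (‖v‖ ^ (n : ℕ))⁻¹| := by
  rw [stronglySingularKernel, stronglySingularKernel, if_pos ⟨hu0, hu1⟩, if_pos ⟨hv0, hv1⟩]
  have key : Complex.exp (Complex.I * ((‖u‖ ^ (-b) : ℝ) : ℂ)) / ((‖u‖ : ℂ) ^ (n : ℕ)) -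
      Complex.exp (Complex.I * ((‖v‖ ^ (-b) : ℝ) : ℂ)) / ((‖v‖ : ℂ) ^ (n : ℕ)) =
      (Complex.exp (Complex.I * ((‖u‖ ^ (-b) : ℝ) : ℂ)) -
        Complex.exp (Complex.I * ((‖v‖ ^ (-b) : ℝ) : ℂ))) * (((‖u‖ : ℂ) ^ (n : ℕ))⁻¹) +
      Complex.exp (Complex.I * ((‖v‖ ^ (-b) : ℝ) : ℂ)) *
        (((‖u‖ : ℂ) ^ (n : ℕ))⁻¹ - ((‖v‖ : ℂ) ^ (n : ℕ))⁻¹) := by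
    rw [div_eq_mul_inv, div_eq_mul_inv]; ring
  rw [key]
  refine (norm_add_le _ _).trans ?_
  rw [norm_mul, norm_mul, norm_exp_I, one_mul]
  have h1 : ‖((‖u‖ : ℂ) ^ (n : ℕ))⁻¹‖ = (‖u‖ ^ (n : ℕ))⁻¹ := by
    rw [norm_inv, norm_pow, Complex.norm_real, Real.norm_eq_abs, abs_of_pos hu0]
  have h2 : ‖((‖u‖ : ℂ) ^ (n : ℕ))⁻¹ - ((‖v‖ : ℂ) ^ (n : ℕ))⁻¹‖ =
      |(‖u‖ ^ (n : ℕ))⁻¹ - (‖v‖ ^ (n : ℕ))⁻¹| := by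
    have : ((‖u‖ : ℂ) ^ (n : ℕ))⁻¹ - ((‖v‖ : ℂ) ^ (n : ℕ))⁻¹ =
        (((‖u‖ ^ (n : ℕ))⁻¹ - (‖v‖ ^ (n : ℕ))⁻¹ : ℝ) : ℂ) := by push_cast; ring
    rw [this, Complex.norm_real, Real.norm_eq_abs]
  rw [h1, h2]
  gcongr
  exact exp_I_diff_le _ _

lemma smooth_real_bound (n : ℕ) (b : ℝ) (hb : 0 < b) {a r d : ℝ}
    (hr0 : 0 < r) (hr1 : r ≤ 1) (ha1 : a ≤ 1) (har : |a - r| ≤ d) (hra : r / 2 < a) :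
    2 * |a ^ (-b) - r ^ (-b)| * (a ^ (n : ℕ))⁻¹ + |(a ^ (n : ℕ))⁻¹ - (r ^ (n : ℕ))⁻¹| ≤
      c1 n b * d * r ^ (-((n : ℝ) + b + 1)) := by
  set m := r / 2 with hm
  have hm0 : 0 < m := by positivity
  have hm1 : m ≤ 1 := by rw [hm]; linarith
  have ha0 : 0 < a := lt_trans hm0 hra
  have hd0 : 0 ≤ d := le_trans (abs_nonneg _) har
  -- bound on |a^(-b) - r^(-b)|
  have h1 : |a ^ (-b) - r ^ (-b)| ≤ b * d * (2 * m ^ (-b - 1)) := by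
    refine (rpow_diff_le (-b) ha0 hr0).trans ?_
    have e1 : a ^ (-b - 1) ≤ m ^ (-b - 1) :=
      Real.rpow_le_rpow_of_nonpos hm0 hra.le (by linarith)
    have e2 : r ^ (-b - 1) ≤ m ^ (-b - 1) :=
      Real.rpow_le_rpow_of_nonpos hm0 (by linarith) (by linarith)
    have : |(-b)| = b := by rw [abs_neg, abs_of_pos hb]
    rw [this]
    have hb' : b * |a - r| ≤ b * d := mul_le_mul_of_nonneg_left har hb.le
    calc b * |a - r| * (a ^ (-b - 1) + r ^ (-b - 1))
        ≤ b * d * (a ^ (-b - 1) + r ^ (-b - 1)) := by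
          apply mul_le_mul_of_nonneg_right hb'
          positivity
      _ ≤ b * d * (2 * m ^ (-b - 1)) := by
          apply mul_le_mul_of_nonneg_left (by linarith) (by positivity)
  -- bound on (a^n)⁻¹
  have h2 : (a ^ (n : ℕ))⁻¹ ≤ m ^ (-(n : ℝ)) := by
    rw [← Real.rpow_natCast a n, ← Real.rpow_neg ha0.le]
    exact Real.rpow_le_rpow_of_nonpos hm0 hra.le (by linarith [(Nat.cast_nonneg n : (0:ℝ) ≤ n)])
  -- bound on second term
  have h3 : |(a ^ (n : ℕ))⁻¹ - (r ^ (n : ℕ))⁻¹| ≤ (n : ℝ) * d * (2 * m ^ (-(n : ℝ) - 1)) := by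
    rw [← Real.rpow_natCast a n, ← Real.rpow_neg ha0.le,
      ← Real.rpow_natCast r n, ← Real.rpow_neg hr0.le]
    refine (rpow_diff_le (-(n : ℝ)) ha0 hr0).trans ?_
    have e1 : a ^ (-(n : ℝ) - 1) ≤ m ^ (-(n : ℝ) - 1) :=
      Real.rpow_le_rpow_of_nonpos hm0 hra.le (by linarith [(Nat.cast_nonneg n : (0:ℝ) ≤ n)])
    have e2 : r ^ (-(n : ℝ) - 1) ≤ m ^ (-(n : ℝ) - 1) :=
      Real.rpow_le_rpow_of_nonpos hm0 (by linarith) (by linarith [(Nat.cast_nonneg n : (0:ℝ) ≤ n)])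
    have hn : |(-(n : ℝ))| = (n : ℝ) := by rw [abs_neg, abs_of_nonneg (Nat.cast_nonneg n)]
    rw [hn]
    have hb' : (n : ℝ) * |a - r| ≤ (n : ℝ) * d :=
      mul_le_mul_of_nonneg_left har (Nat.cast_nonneg n)
    calc (n : ℝ) * |a - r| * (a ^ (-(n : ℝ) - 1) + r ^ (-(n : ℝ) - 1))
        ≤ (n : ℝ) * d * (a ^ (-(n : ℝ) - 1) + r ^ (-(n : ℝ) - 1)) := by
          apply mul_le_mul_of_nonneg_right hb'
          positivity
      _ ≤ (n : ℝ) * d * (2 * m ^ (-(n : ℝ) - 1)) := by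
          apply mul_le_mul_of_nonneg_left (by linarith) (by positivity)
  -- combine
  have key1 : m ^ (-b - 1) * m ^ (-(n : ℝ)) = m ^ (-((n : ℝ) + b + 1)) := by
    rw [← Real.rpow_add hm0]; ring_nf
  have key2 : m ^ (-(n : ℝ) - 1) ≤ m ^ (-((n : ℝ) + b + 1)) :=
    Real.rpow_le_rpow_of_exponent_ge hm0 hm1 (by linarith)
  have key3 : m ^ (-((n : ℝ) + b + 1)) = (2 : ℝ) ^ ((n : ℝ) + b + 1) * r ^ (-((n : ℝ) + b + 1)) := by
    rw [hm, Real.div_rpow hr0.le (by norm_num : (0:ℝ) ≤ 2), div_eq_mul_inv,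
      ← Real.rpow_neg (by norm_num : (0:ℝ) ≤ 2), neg_neg, mul_comm]
  have t1 : 2 * |a ^ (-b) - r ^ (-b)| * (a ^ (n : ℕ))⁻¹ ≤
      4 * b * d * (m ^ (-b - 1) * m ^ (-(n : ℝ))) := by
    have hinv : (0:ℝ) ≤ (a ^ (n : ℕ))⁻¹ := by positivity
    calc 2 * |a ^ (-b) - r ^ (-b)| * (a ^ (n : ℕ))⁻¹
        ≤ 2 * (b * d * (2 * m ^ (-b - 1))) * m ^ (-(n : ℝ)) := by
          apply mul_le_mul (by apply mul_le_mul_of_nonneg_left h1; norm_num) h2 hinv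
          positivity
      _ = 4 * b * d * (m ^ (-b - 1) * m ^ (-(n : ℝ))) := by ring
  have t2 : |(a ^ (n : ℕ))⁻¹ - (r ^ (n : ℕ))⁻¹| ≤ 2 * n * d * m ^ (-((n : ℝ) + b + 1)) := by
    refine h3.trans ?_
    calc (n : ℝ) * d * (2 * m ^ (-(n : ℝ) - 1)) = 2 * n * d * m ^ (-(n : ℝ) - 1) := by ring
      _ ≤ 2 * n * d * m ^ (-((n : ℝ) + b + 1)) := by
          apply mul_le_mul_of_nonneg_left key2 (by positivity)
  rw [key1] at t1
  have : 2 * |a ^ (-b) - r ^ (-b)| * (a ^ (n : ℕ))⁻¹ + |(a ^ (n : ℕ))⁻¹ - (r ^ (n : ℕ))⁻¹| ≤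
      (4 * b + 2 * n) * d * m ^ (-((n : ℝ) + b + 1)) := by
    have := add_le_add t1 t2
    linarith [this]
  refine this.trans ?_
  rw [key3, c1]
  ring_nf
  exact le_refl _

lemma kernel_diff_bound (n : ℕ) (b : ℝ) (hb : 0 < b) (x x₀ y : EuclideanSpace ℝ (Fin n))
    (hx : x ≠ x₀) (hd1 : dist x₀ x ≤ 1)
    (hy : 2 * dist x₀ x ^ (1 / (1 + b)) < dist x₀ y) :
    ‖stronglySingularKernel n b (x - y) - stronglySingularKernel n b (x₀ - y)‖ ≤
      c1 n b * dist x₀ x * dist x₀ y ^ (-((n : ℝ) + b + 1)) +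
        Set.indicator (Set.Ioc (1 / 2 : ℝ) 2) (fun _ => (2 : ℝ) ^ (n : ℕ)) (dist x₀ y) := by
  set d := dist x₀ x with hd
  set r := dist x₀ y with hr
  have hd0 : 0 < d := dist_pos.2 (Ne.symm hx)
  have hdd : d ≤ d ^ (1 / (1 + b)) := by
    have h1b : (0:ℝ) < 1 + b := by linarith
    have := Real.rpow_le_rpow_of_exponent_ge hd0 hd1
      (by rw [div_le_one h1b]; linarith : 1 / (1 + b) ≤ 1)
    rwa [Real.rpow_one] at this
  have hr2d : 2 * d < r := lt_of_le_of_lt (by linarith) hy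
  have hr0 : 0 < r := lt_trans (by linarith) hr2d
  have hrnorm : ‖x₀ - y‖ = r := (dist_eq_norm x₀ y).symm
  have hanorm : ‖x - y‖ = dist x y := (dist_eq_norm x y).symm
  set a := ‖x - y‖ with ha
  have har : |a - r| ≤ d := by
    have h1 : |‖x - y‖ - ‖x₀ - y‖| ≤ ‖(x - y) - (x₀ - y)‖ := abs_norm_sub_norm_le _ _
    have h2 : (x - y) - (x₀ - y) = x - x₀ := by abel
    rw [h2] at h1
    rw [← hrnorm] at *
    calc |a - ‖x₀ - y‖| ≤ ‖x - x₀‖ := h1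
      _ = d := by rw [hd, dist_comm, dist_eq_norm]
  have hra : r / 2 < a := by
    have : a ≥ r - d := by cases' abs_le.1 har with h1 h2; linarith
    linarith
  have ha0 : 0 < a := lt_trans (by linarith) hra
  have hrle : r ≤ a + d := by cases' abs_le.1 har with h1 h2; linarith
  have hind_pos : (0:ℝ) ≤ Set.indicator (Set.Ioc (1 / 2 : ℝ) 2) (fun _ => (2 : ℝ) ^ (n : ℕ)) r :=
    Set.indicator_nonneg (fun _ _ => by positivity) r
  have hterm_pos : (0:ℝ) ≤ c1 n b * d * r ^ (-((n : ℝ) + b + 1)) := by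
    have := c1_pos n b hb
    positivity
  by_cases hA : a ≤ 1 <;> by_cases hR : r ≤ 1
  · -- smooth case
    have key := kernel_sub_smooth n b (x - y) (x₀ - y) ha0 hA (by rw [hrnorm]; exact hr0)
      (by rw [hrnorm]; exact hR)
    rw [hrnorm] at key
    have key2 := smooth_real_bound n b hb hr0 hR hA har hra
    have := key.trans key2
    linarith
  · -- a ≤ 1 < r : second kernel vanishes
    push_neg at hR
    have hz : stronglySingularKernel n b (x₀ - y) = 0 := by
      rw [stronglySingularKernel, if_neg]
      rw [hrnorm]
      rintro ⟨-, h⟩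
      linarith
    rw [hz, sub_zero, kernel_norm n b _ ha0 hA]
    have hbound : (a ^ (n : ℕ))⁻¹ ≤ (2:ℝ) ^ (n : ℕ) := by
      rw [inv_le_comm₀ (by positivity) (by positivity)]
      calc ((2:ℝ) ^ (n : ℕ))⁻¹ = (1/2 : ℝ) ^ (n : ℕ) := by
            rw [one_div, inv_pow]
        _ ≤ a ^ (n : ℕ) := by
            apply pow_le_pow_left₀ (by norm_num)
            linarith
    have hmem : r ∈ Set.Ioc (1 / 2 : ℝ) 2 := ⟨by linarith, by linarith⟩
    rw [Set.indicator_of_mem hmem]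
    linarith
  · -- r ≤ 1 < a : first kernel vanishes
    push_neg at hA
    have hz : stronglySingularKernel n b (x - y) = 0 := by
      rw [stronglySingularKernel, if_neg]
      rintro ⟨-, h⟩
      rw [← ha] at h
      linarith
    rw [hz, zero_sub, norm_neg, kernel_norm n b _ (by rw [hrnorm]; exact hr0)
      (by rw [hrnorm]; exact hR), hrnorm]
    have hd2 : d < 1 / 2 := by
      by_contra hcon
      push_neg at hcon
      linarith
    have hrge : a - d ≤ r := by cases' abs_le.1 har with h1 h2; linarith
    have hr12 : 1 / 2 < r := by linarith
    have hbound : (r ^ (n : ℕ))⁻¹ ≤ (2:ℝ) ^ (n : ℕ) := by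
      rw [inv_le_comm₀ (by positivity) (by positivity)]
      calc ((2:ℝ) ^ (n : ℕ))⁻¹ = (1/2 : ℝ) ^ (n : ℕ) := by rw [one_div, inv_pow]
        _ ≤ r ^ (n : ℕ) := by
            apply pow_le_pow_left₀ (by norm_num)
            linarith
    have hmem : r ∈ Set.Ioc (1 / 2 : ℝ) 2 := ⟨hr12, by linarith⟩
    rw [Set.indicator_of_mem hmem]
    linarith
  · -- both vanish
    push_neg at hA hR
    have hz1 : stronglySingularKernel n b (x - y) = 0 := by
      rw [stronglySingularKernel, if_neg]
      rintro ⟨-, h⟩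
      rw [← ha] at h
      linarith
    have hz2 : stronglySingularKernel n b (x₀ - y) = 0 := by
      rw [stronglySingularKernel, if_neg]
      rw [hrnorm]
      rintro ⟨-, h⟩
      linarith
    rw [hz1, hz2, sub_zero, norm_zero]
    linarith

lemma ball_bound (n : ℕ) (w : EuclideanSpace ℝ (Fin n) → ℝ)
    (x x₀ : EuclideanSpace ℝ (Fin n)) (R : ℝ) (hR : dist x₀ x < R) :
    ∫⁻ y in ball x₀ R, ENNReal.ofReal (w y) ≤ maximalFn n w x * volume (ball x₀ R) := by
  have hR0 : 0 < R := lt_of_le_of_lt dist_nonneg hR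
  have hx : x ∈ ball x₀ R := by rw [mem_ball, dist_comm]; exact hR
  have h1 : (∫⁻ y in ball x₀ R, ENNReal.ofReal (w y)) / volume (ball x₀ R) ≤
      maximalFn n w x := by
    unfold maximalFn
    exact le_iSup_of_le x₀ (le_iSup_of_le R (le_iSup_of_le hR0 (le_iSup_of_le hx le_rfl)))
  have hvol0 : volume (ball x₀ R) ≠ 0 := (measure_ball_pos volume x₀ hR0).ne'
  have hvolt : volume (ball x₀ R) ≠ ∞ := measure_ball_lt_top.ne
  rw [← ENNReal.div_le_iff_le_mul (Or.inl hvol0) (Or.inl hvolt)]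
  exact h1

lemma geom_calc (n : ℕ) (b : ℝ) (hb : 0 < b) {d : ℝ} (hd0 : 0 < d) (hd1 : d ≤ 1) (k : ℕ) :
    c1 n b * d * (2 * d ^ (1 / (1 + b)) * 2 ^ k) ^ (-((n : ℝ) + b + 1)) *
      (2 * d ^ (1 / (1 + b)) * 2 ^ (k + 1)) ^ (n : ℕ) ≤
    c1 n b * 2 ^ (n : ℕ) * (1 / 2 : ℝ) ^ k := by
  have hb1 : (0:ℝ) < 1 + b := by linarith
  set A := 2 * d ^ (1 / (1 + b)) with hA
  have hdp : (0:ℝ) < d ^ (1 / (1 + b)) := Real.rpow_pos_of_pos hd0 _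
  have hA0 : (0:ℝ) < A := by positivity
  set B := A * 2 ^ k with hB
  have hB0 : (0:ℝ) < B := by positivity
  have hc1 : (0:ℝ) ≤ c1 n b := by
    unfold c1
    have : (0:ℝ) < (2 : ℝ) ^ ((n : ℝ) + b + 1) := Real.rpow_pos_of_pos (by norm_num) _
    positivity
  -- rewrite (A * 2^(k+1))^n = B^n * 2^n
  have eB2 : (A * 2 ^ (k + 1) : ℝ) = B * 2 := by rw [hB, pow_succ]; ring
  have e1 : (A * 2 ^ (k + 1) : ℝ) ^ (n : ℕ) = B ^ (n : ℕ) * 2 ^ (n : ℕ) := by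
    rw [eB2, mul_pow]
  -- split B ^ (-(n+b+1)) = B ^ (-(n:ℝ)) * B ^ (-(b+1))
  have e2 : B ^ (-((n : ℝ) + b + 1)) = B ^ (-(n : ℝ)) * B ^ (-(b + 1)) := by
    rw [← Real.rpow_add hB0]; ring_nf
  have e3 : B ^ (-(n : ℝ)) * B ^ (n : ℕ) = 1 := by
    rw [← Real.rpow_natCast B n, ← Real.rpow_add hB0]
    simp
  -- B ^ (-(b+1)) = A ^ (-(b+1)) * (2^k) ^ (-(b+1))
  have e4 : B ^ (-(b + 1)) = A ^ (-(b + 1)) * ((2:ℝ) ^ k) ^ (-(b + 1)) := by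
    rw [hB, Real.mul_rpow hA0.le (by positivity)]
  -- d * A ^ (-(b+1)) = 2 ^ (-(b+1)) ≤ 1
  have e5 : d * A ^ (-(b + 1)) = (2:ℝ) ^ (-(b + 1)) := by
    rw [hA, Real.mul_rpow (by norm_num) hdp.le]
    have hexp : (1 / (1 + b)) * (-(b + 1)) = -1 := by field_simp; ring
    have : (d ^ (1 / (1 + b))) ^ (-(b + 1)) = d⁻¹ := by
      rw [← Real.rpow_mul hd0.le, hexp, Real.rpow_neg_one]
    rw [this]
    field_simp
  have e6 : ((2:ℝ) ^ k) ^ (-(b + 1)) ≤ (1 / 2 : ℝ) ^ k := by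
    have h2k : (1:ℝ) ≤ 2 ^ k := one_le_pow₀ (by norm_num)
    have : ((2:ℝ) ^ k) ^ (-(b + 1)) ≤ ((2:ℝ) ^ k) ^ (-1 : ℝ) :=
      Real.rpow_le_rpow_of_exponent_le h2k (by linarith)
    refine this.trans ?_
    rw [Real.rpow_neg_one, one_div, inv_pow]
  have e7 : (2:ℝ) ^ (-(b + 1)) ≤ 1 :=
    Real.rpow_le_one_of_one_le_of_nonpos (by norm_num) (by linarith)
  calc c1 n b * d * B ^ (-((n : ℝ) + b + 1)) * (A * 2 ^ (k + 1)) ^ (n : ℕ)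
      = c1 n b * (B ^ (-(n : ℝ)) * B ^ (n : ℕ)) * 2 ^ (n : ℕ) *
        ((d * A ^ (-(b + 1))) * ((2:ℝ) ^ k) ^ (-(b + 1))) := by
        rw [e1, e2, e4]; ring
    _ = c1 n b * 2 ^ (n : ℕ) * ((2:ℝ) ^ (-(b + 1)) * ((2:ℝ) ^ k) ^ (-(b + 1))) := by
        rw [e3, e5]; ring
    _ ≤ c1 n b * 2 ^ (n : ℕ) * (1 * (1 / 2 : ℝ) ^ k) := by
        have hp : (0:ℝ) ≤ c1 n b * 2 ^ (n : ℕ) := by positivity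
        apply mul_le_mul_of_nonneg_left _ hp
        apply mul_le_mul e7 e6 (by positivity) (by norm_num)
    _ = c1 n b * 2 ^ (n : ℕ) * (1 / 2 : ℝ) ^ k := by ring

/-- **Weighted Hörmander-type estimate (Lemma).**
For `b > 0` there is `C > 0`, depending only on `n` and `b`, such that for every weight `w`,
every `x₀` and almost every `x ≠ x₀` with `|x₀ - x| ≤ 1`,
`∫_{|x₀-y| > 2|x₀-x|^{1/(1+b)}} |K_b(x-y) - K_b(x₀-y)| w(y) dy ≤ C Mw(x)`. -/
theorem weighted_hormander (n : ℕ) (b : ℝ) (hb : 0 < b) :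
    ∃ C : ℝ, 0 < C ∧
      ∀ w : EuclideanSpace ℝ (Fin n) → ℝ, LocallyIntegrable w volume → (∀ x, 0 ≤ w x) →
        ∀ x₀ : EuclideanSpace ℝ (Fin n),
          ∀ᵐ x ∂(volume : Measure (EuclideanSpace ℝ (Fin n))), x ≠ x₀ → dist x₀ x ≤ 1 →
            (∫⁻ y in {y | 2 * dist x₀ x ^ (1 / (1 + b)) < dist x₀ y},
                ENNReal.ofReal
                  (‖stronglySingularKernel n b (x - y) - stronglySingularKernel n b (x₀ - y)‖ *
                    w y)) ≤
              ENNReal.ofReal C * maximalFn n w x := by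
  rcases Nat.eq_zero_or_pos n with hn | hn
  · subst hn
    refine ⟨1, one_pos, fun w _ _ x₀ => ?_⟩
    haveI : Subsingleton (EuclideanSpace ℝ (Fin 0)) :=
      ⟨fun a c => by ext i; exact Fin.elim0 i⟩
    exact Eventually.of_forall fun x hx _ => absurd (Subsingleton.elim x x₀) hx
  · haveI hnt : Nontrivial (EuclideanSpace ℝ (Fin n)) := by
      refine nontrivial_of_ne (EuclideanSpace.single (⟨0, hn⟩ : Fin n) (1 : ℝ)) 0 ?_
      intro h
      have := EuclideanSpace.norm_single (𝕜 := ℝ) (⟨0, hn⟩ : Fin n) (1 : ℝ)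
      rw [h] at this
      simp at this
    set V1 : ℝ := (volume (ball (0 : EuclideanSpace ℝ (Fin n)) 1)).toReal with hV1
    have hV1nn : 0 ≤ V1 := ENNReal.toReal_nonneg
    have hc1 := c1_pos n b hb
    set C : ℝ := 2 * (c1 n b * 2 ^ (n : ℕ)) * V1 + 2 ^ (n : ℕ) * 3 ^ (n : ℕ) * V1 + 1 with hC
    have hC0 : 0 < C := by positivity
    refine ⟨C, hC0, fun w hw hw0 x₀ => ?_⟩
    refine Eventually.of_forall fun x hx hd1 => ?_
    set d := dist x₀ x with hd
    have hd0 : 0 < d := dist_pos.2 (Ne.symm hx)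
    set A : ℝ := 2 * d ^ (1 / (1 + b)) with hA
    have hdp : (0:ℝ) < d ^ (1 / (1 + b)) := Real.rpow_pos_of_pos hd0 _
    have hA0 : (0:ℝ) < A := by positivity
    have hdd : d ≤ d ^ (1 / (1 + b)) := by
      have h1b : (0:ℝ) < 1 + b := by linarith
      have := Real.rpow_le_rpow_of_exponent_ge hd0 hd1
        (by rw [div_le_one h1b]; linarith : 1 / (1 + b) ≤ 1)
      rwa [Real.rpow_one] at this
    have hdA : d < A := by
      rw [hA]; nlinarith
    set S : Set (EuclideanSpace ℝ (Fin n)) := {y | A < dist x₀ y} with hS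
    have hSm : MeasurableSet S :=
      measurableSet_lt measurable_const (measurable_const.dist measurable_id)
    set M : ℝ≥0∞ := maximalFn n w x with hM
    set p : ℝ := -((n : ℝ) + b + 1) with hp
    set f1 : EuclideanSpace ℝ (Fin n) → ℝ≥0∞ :=
      fun y => ENNReal.ofReal (c1 n b * d * dist x₀ y ^ p) * ENNReal.ofReal (w y) with hf1
    set f2 : EuclideanSpace ℝ (Fin n) → ℝ≥0∞ :=
      fun y => ENNReal.ofReal
        (Set.indicator (Set.Ioc (1 / 2 : ℝ) 2) (fun _ => (2 : ℝ) ^ (n : ℕ)) (dist x₀ y)) *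
        ENNReal.ofReal (w y) with hf2
    -- Step A : pointwise bound on S
    have stepA : ∀ y ∈ S, ENNReal.ofReal
        (‖stronglySingularKernel n b (x - y) - stronglySingularKernel n b (x₀ - y)‖ * w y) ≤
        f1 y + f2 y := by
      intro y hy
      have hkey := kernel_diff_bound n b hb x x₀ y hx hd1 hy
      have ht1 : 0 ≤ c1 n b * d * dist x₀ y ^ p :=
        mul_nonneg (mul_nonneg hc1.le hd0.le) (Real.rpow_nonneg dist_nonneg _)
      have ht2 : 0 ≤ Set.indicator (Set.Ioc (1 / 2 : ℝ) 2)
          (fun _ => (2 : ℝ) ^ (n : ℕ)) (dist x₀ y) :=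
        Set.indicator_nonneg (fun _ _ => by positivity) _
      calc ENNReal.ofReal (‖stronglySingularKernel n b (x - y) -
              stronglySingularKernel n b (x₀ - y)‖ * w y)
          ≤ ENNReal.ofReal ((c1 n b * d * dist x₀ y ^ p +
              Set.indicator (Set.Ioc (1 / 2 : ℝ) 2)
                (fun _ => (2 : ℝ) ^ (n : ℕ)) (dist x₀ y)) * w y) := by
            apply ENNReal.ofReal_le_ofReal
            exact mul_le_mul_of_nonneg_right hkey (hw0 y)
        _ = f1 y + f2 y := by
            rw [add_mul, ENNReal.ofReal_add (mul_nonneg ht1 (hw0 y)) (mul_nonneg ht2 (hw0 y)),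
              ENNReal.ofReal_mul ht1, ENNReal.ofReal_mul ht2]
    -- measurability of f1
    have hwm : AEMeasurable (fun y => ENNReal.ofReal (w y)) (volume.restrict S) :=
      (hw.aestronglyMeasurable.aemeasurable.ennreal_ofReal).restrict
    have hg1 : Measurable (fun y => ENNReal.ofReal (c1 n b * d * dist x₀ y ^ p)) := by
      fun_prop
    have hf1m : AEMeasurable f1 (volume.restrict S) := hg1.aemeasurable.mul hwm
    have step1 : (∫⁻ y in S, ENNReal.ofReal
        (‖stronglySingularKernel n b (x - y) - stronglySingularKernel n b (x₀ - y)‖ * w y)) ≤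
        (∫⁻ y in S, f1 y) + ∫⁻ y in S, f2 y := by
      refine le_trans (lintegral_mono_ae (ae_restrict_of_forall_mem hSm stepA)) ?_
      rw [lintegral_add_left' hf1m]
    -- Step D : bound on f2 integral
    have hballm : MeasurableSet (ball x₀ (3:ℝ)) := measurableSet_ball
    have stepD : (∫⁻ y in S, f2 y) ≤
        ENNReal.ofReal (2 ^ (n : ℕ)) * (M * volume (ball x₀ (3:ℝ))) := by
      have hpt : ∀ y, f2 y ≤ Set.indicator (ball x₀ (3:ℝ))
          (fun y => ENNReal.ofReal ((2:ℝ) ^ (n : ℕ)) * ENNReal.ofReal (w y)) y := by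
        intro y
        by_cases hmem : dist x₀ y ∈ Set.Ioc (1 / 2 : ℝ) 2
        · have hy3 : y ∈ ball x₀ (3:ℝ) := by
            rw [mem_ball, dist_comm]
            exact lt_of_le_of_lt hmem.2 (by norm_num)
          rw [hf2]
          simp only [Set.indicator_of_mem hmem, Set.indicator_of_mem hy3]
          exact le_rfl
        · rw [hf2]
          simp only [Set.indicator_of_notMem hmem, ENNReal.ofReal_zero, zero_mul]
          exact bot_le
      calc (∫⁻ y in S, f2 y)
          ≤ ∫⁻ y in S, Set.indicator (ball x₀ (3:ℝ))
              (fun y => ENNReal.ofReal ((2:ℝ) ^ (n : ℕ)) * ENNReal.ofReal (w y)) y :=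
            lintegral_mono hpt
        _ ≤ ∫⁻ y, Set.indicator (ball x₀ (3:ℝ))
              (fun y => ENNReal.ofReal ((2:ℝ) ^ (n : ℕ)) * ENNReal.ofReal (w y)) y :=
            setLIntegral_le_lintegral _ _
        _ = ∫⁻ y in ball x₀ (3:ℝ),
              ENNReal.ofReal ((2:ℝ) ^ (n : ℕ)) * ENNReal.ofReal (w y) :=
            lintegral_indicator hballm _
        _ = ENNReal.ofReal ((2:ℝ) ^ (n : ℕ)) * ∫⁻ y in ball x₀ (3:ℝ), ENNReal.ofReal (w y) :=
            lintegral_const_mul' _ _ ENNReal.ofReal_ne_top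
        _ ≤ ENNReal.ofReal ((2:ℝ) ^ (n : ℕ)) * (M * volume (ball x₀ (3:ℝ))) := by
            apply mul_le_mul_right
            exact ball_bound n w x x₀ 3 (by rw [← hd]; linarith)
    -- Step E : dyadic annuli bound on f1 integral
    set T : ℕ → Set (EuclideanSpace ℝ (Fin n)) :=
      fun k => {y | A * 2 ^ k ≤ dist x₀ y ∧ dist x₀ y < A * 2 ^ (k + 1)} with hT
    have hdistm : Measurable fun y : EuclideanSpace ℝ (Fin n) => dist x₀ y :=
      measurable_const.dist measurable_id
    have hTm : ∀ k, MeasurableSet (T k) := by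
      intro k
      have h1 : MeasurableSet {y : EuclideanSpace ℝ (Fin n) | A * 2 ^ k ≤ dist x₀ y} :=
        measurableSet_le measurable_const hdistm
      have h2 : MeasurableSet {y : EuclideanSpace ℝ (Fin n) | dist x₀ y < A * 2 ^ (k + 1)} :=
        measurableSet_lt hdistm measurable_const
      exact h1.inter h2
    have hcover : S ⊆ ⋃ k, T k := by
      intro y hy
      have hyA : A < dist x₀ y := hy
      have hex : ∃ k : ℕ, dist x₀ y < A * 2 ^ (k + 1) := by
        obtain ⟨k, hk⟩ := pow_unbounded_of_one_lt (dist x₀ y / A) (one_lt_two : (1:ℝ) < 2)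
        rw [div_lt_iff₀ hA0] at hk
        refine ⟨k, ?_⟩
        have h2k : (2:ℝ) ^ k ≤ 2 ^ (k + 1) := by
          apply pow_le_pow_right₀ (by norm_num)
          omega
        nlinarith
      classical
      have hk₀ : dist x₀ y < A * 2 ^ (Nat.find hex + 1) := Nat.find_spec hex
      have hlow : A * 2 ^ (Nat.find hex) ≤ dist x₀ y := by
        rcases Nat.eq_zero_or_pos (Nat.find hex) with h0 | h0
        · rw [h0, pow_zero, mul_one]; exact hyA.le
        · obtain ⟨j, hj⟩ : ∃ j, Nat.find hex = j + 1 := ⟨Nat.find hex - 1, by omega⟩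
          have hmin := Nat.find_min hex (m := j) (by omega)
          push_neg at hmin
          rw [hj]
          exact hmin
      exact Set.mem_iUnion.2 ⟨Nat.find hex, hlow, hk₀⟩
    have hpneg : p ≤ 0 := by
      rw [hp]
      have : (0:ℝ) ≤ (n:ℝ) := Nat.cast_nonneg n
      linarith
    have stepEk : ∀ k, (∫⁻ y in T k, f1 y) ≤
        ENNReal.ofReal (c1 n b * 2 ^ (n : ℕ) * (1 / 2 : ℝ) ^ k * V1) * M := by
      intro k
      have hAk0 : (0:ℝ) < A * 2 ^ k := by positivity
      have hptk : ∀ y ∈ T k, f1 y ≤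
          ENNReal.ofReal (c1 n b * d * (A * 2 ^ k) ^ p) * ENNReal.ofReal (w y) := by
        intro y hyk
        apply mul_le_mul_left
        apply ENNReal.ofReal_le_ofReal
        rw [mul_assoc, mul_assoc]
        apply mul_le_mul_of_nonneg_left _ hc1.le
        apply mul_le_mul_of_nonneg_left _ hd0.le
        exact Real.rpow_le_rpow_of_nonpos hAk0 hyk.1 hpneg
      have hterm0 : (0:ℝ) ≤ c1 n b * d * (A * 2 ^ k) ^ p :=
        mul_nonneg (mul_nonneg hc1.le hd0.le) (Real.rpow_nonneg hAk0.le _)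
      calc (∫⁻ y in T k, f1 y)
          ≤ ∫⁻ y in T k,
              ENNReal.ofReal (c1 n b * d * (A * 2 ^ k) ^ p) * ENNReal.ofReal (w y) :=
            lintegral_mono_ae (ae_restrict_of_forall_mem (hTm k) hptk)
        _ = ENNReal.ofReal (c1 n b * d * (A * 2 ^ k) ^ p) *
              ∫⁻ y in T k, ENNReal.ofReal (w y) :=
            lintegral_const_mul' _ _ ENNReal.ofReal_ne_top
        _ ≤ ENNReal.ofReal (c1 n b * d * (A * 2 ^ k) ^ p) *
              ∫⁻ y in ball x₀ (A * 2 ^ (k + 1)), ENNReal.ofReal (w y) := by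
            apply mul_le_mul_right
            apply lintegral_mono_set
            intro y hyk
            rw [mem_ball, dist_comm]
            exact hyk.2
        _ ≤ ENNReal.ofReal (c1 n b * d * (A * 2 ^ k) ^ p) *
              (M * volume (ball x₀ (A * 2 ^ (k + 1)))) := by
            apply mul_le_mul_right
            apply ball_bound
            rw [← hd]
            calc d < A := hdA
              _ ≤ A * 2 ^ (k + 1) := le_mul_of_one_le_right hA0.le (one_le_pow₀ one_le_two)
        _ = ENNReal.ofReal (c1 n b * d * (A * 2 ^ k) ^ p) *
              (M * (ENNReal.ofReal ((A * 2 ^ (k + 1)) ^ (n : ℕ)) * ENNReal.ofReal V1)) := by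
            rw [Measure.addHaar_ball volume x₀ (by positivity : (0:ℝ) ≤ A * 2 ^ (k + 1)),
              finrank_euclideanSpace_fin, hV1,
              ENNReal.ofReal_toReal measure_ball_lt_top.ne]
        _ = ENNReal.ofReal (c1 n b * d * (A * 2 ^ k) ^ p * (A * 2 ^ (k + 1)) ^ (n : ℕ) * V1) *
              M := by
            rw [ENNReal.ofReal_mul (mul_nonneg hterm0 (by positivity)),
              ENNReal.ofReal_mul hterm0]
            ring
        _ ≤ ENNReal.ofReal (c1 n b * 2 ^ (n : ℕ) * (1 / 2 : ℝ) ^ k * V1) * M := by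
            apply mul_le_mul_left
            apply ENNReal.ofReal_le_ofReal
            apply mul_le_mul_of_nonneg_right _ hV1nn
            exact geom_calc n b hb hd0 hd1 k
    have h12 : ENNReal.ofReal (1 / 2 : ℝ) = 2⁻¹ := by
      rw [one_div, ENNReal.ofReal_inv_of_pos two_pos]
      norm_num
    have stepE : (∫⁻ y in S, f1 y) ≤ ENNReal.ofReal (c1 n b * 2 ^ (n : ℕ) * V1) * M * 2 := by
      calc (∫⁻ y in S, f1 y)
          ≤ ∫⁻ y in ⋃ k, T k, f1 y := lintegral_mono_set hcover
        _ ≤ ∑' k, ∫⁻ y in T k, f1 y := lintegral_iUnion_le _ _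
        _ ≤ ∑' k, ENNReal.ofReal (c1 n b * 2 ^ (n : ℕ) * (1 / 2 : ℝ) ^ k * V1) * M :=
            ENNReal.tsum_le_tsum stepEk
        _ = ∑' k, ENNReal.ofReal (c1 n b * 2 ^ (n : ℕ) * V1) * M * (ENNReal.ofReal (1/2:ℝ)) ^ k := by
            congr 1
            funext k
            have hre : c1 n b * 2 ^ (n : ℕ) * (1 / 2 : ℝ) ^ k * V1 =
                (c1 n b * 2 ^ (n : ℕ) * V1) * (1 / 2 : ℝ) ^ k := by ring
            rw [hre, ENNReal.ofReal_mul (by positivity), ENNReal.ofReal_pow (by norm_num)]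
            ring
        _ = ENNReal.ofReal (c1 n b * 2 ^ (n : ℕ) * V1) * M * ∑' k, (ENNReal.ofReal (1/2:ℝ)) ^ k :=
            ENNReal.tsum_mul_left
        _ = ENNReal.ofReal (c1 n b * 2 ^ (n : ℕ) * V1) * M * 2 := by
            rw [h12, ENNReal.tsum_geometric, ENNReal.one_sub_inv_two, inv_inv]
    -- final assembly
    refine step1.trans ((add_le_add stepE stepD).trans ?_)
    have hvol3 : volume (ball x₀ (3:ℝ)) =
        ENNReal.ofReal ((3:ℝ) ^ (n : ℕ)) * ENNReal.ofReal V1 := by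
      rw [Measure.addHaar_ball volume x₀ (by norm_num : (0:ℝ) ≤ 3),
        finrank_euclideanSpace_fin, hV1, ENNReal.ofReal_toReal measure_ball_lt_top.ne]
    rw [hvol3]
    have h2e : (2 : ℝ≥0∞) = ENNReal.ofReal (2:ℝ) := by norm_num
    calc ENNReal.ofReal (c1 n b * 2 ^ (n : ℕ) * V1) * M * 2 +
          ENNReal.ofReal ((2:ℝ) ^ (n : ℕ)) *
            (M * (ENNReal.ofReal ((3:ℝ) ^ (n : ℕ)) * ENNReal.ofReal V1))
        = (ENNReal.ofReal (c1 n b * 2 ^ (n : ℕ) * V1) * ENNReal.ofReal (2:ℝ) +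
            ENNReal.ofReal ((2:ℝ) ^ (n : ℕ)) * ENNReal.ofReal ((3:ℝ) ^ (n : ℕ)) *
              ENNReal.ofReal V1) * M := by
          rw [h2e]; ring
      _ = ENNReal.ofReal (2 * (c1 n b * 2 ^ (n : ℕ)) * V1 + 2 ^ (n : ℕ) * 3 ^ (n : ℕ) * V1) *
            M := by
          rw [← ENNReal.ofReal_mul (by positivity), ← ENNReal.ofReal_mul (by positivity),
            ← ENNReal.ofReal_mul (by positivity), ← ENNReal.ofReal_add (by positivity)]
          · ring_nf
          · positivity
      _ ≤ ENNReal.ofReal C * M := by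
          apply mul_le_mul_left
          apply ENNReal.ofReal_le_ofReal
          rw [hC]
          linarith
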